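/- Acyclicity of the bit-chipping field: the V∂-graph of V_bc on K(N,1) contains no directed cycle. Concretely, assign to each not-fully-dyadic target simplex τ the triple (−q(τ), b(τ), reverse-lexicographic rank of its dyadic part) appropriately ordered; then each double move τ → τ' = V_bc(∂_jτ) strictly decreases a suitable well-founded complexity measure: either the dyadic length q increases, or q is constant and the breakpoint value decreases, or both are constant and the dyadic part increases lexicographically; for fully dyadic simplices, either the sum of components decreases or it stays constant and the sequence increases lexicographically. -/

import Mathlib

/-- `lpow b` is the largest power of 2 not exceeding `b` (for `b ≥ 1`). -/
def lpow (b : ℕ) : ℕ := 2 ^ Nat.log 2 b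

/-- `ltrim b = b - lpow b`. -/
def ltrim (b : ℕ) : ℕ := b - lpow b

/-- All entries of the sequence are positive (nondegenerate simplex of `K(ℕ,1)`). -/
def posL (l : List ℕ) : Prop := ∀ a ∈ l, 1 ≤ a

/-- The length `q` of the dyadic part of `[a_1 | ⋯ | a_k]`: the largest `q` such that
`a_1, …, a_q` are all powers of 2. -/
def dyLen (l : List ℕ) : ℕ :=
  (l.takeWhile fun a => a == 2 ^ Nat.log 2 a).length

/-- `l` is fully dyadic: all entries are powers of 2. -/
def fullyDyadic (l : List ℕ) : Prop := dyLen l = l.length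

/-- Source simplices of type (a) of the bit-chipping field: not fully dyadic, with no
peak, i.e. the dyadic part `a_1 ≤ ⋯ ≤ a_q` is nondecreasing and (if nonempty) its last
entry is smaller than the breakpoint value `a_{q+1}`. -/
def srcA (l : List ℕ) : Prop :=
  dyLen l < l.length ∧
  (∀ i, i + 1 < dyLen l → l.getD i 0 ≤ l.getD (i + 1) 0) ∧
  (∀ i, i + 1 = dyLen l → l.getD i 0 < l.getD (dyLen l) 0)

/-- The bit-chipping field on a type (a) source: split the breakpoint value `b` into
`lpow b | ltrim b`. -/
def VbcA (l : List ℕ) : List ℕ :=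
  l.take (dyLen l) ++ [lpow (l.getD (dyLen l) 0), ltrim (l.getD (dyLen l) 0)] ++
    l.drop (dyLen l + 1)

/-- Source simplices of type (b) of the bit-chipping field: fully dyadic sequences
`a_1 ≤ ⋯ ≤ a_{k-1} < a_k` with `a_k ≥ 2`. -/
def srcB (l : List ℕ) : Prop :=
  fullyDyadic l ∧ l ≠ [] ∧
  (∀ i, i + 2 < l.length → l.getD i 0 ≤ l.getD (i + 1) 0) ∧
  (∀ i, i + 2 = l.length → l.getD i 0 < l.getD (i + 1) 0) ∧
  2 ≤ l.getD (l.length - 1) 0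

/-- The bit-chipping field on a type (b) source: split the last entry into two equal
halves. -/
def VbcB (l : List ℕ) : List ℕ :=
  l.dropLast ++ [l.getD (l.length - 1) 0 / 2, l.getD (l.length - 1) 0 / 2]

/-- The bit-chipping vector field `V_bc`, as a relation: `VbcRel σ τ` iff `σ` is a
source (of type (a) or (b)) and `τ = V_bc σ`. -/
def VbcRel (σ τ : List ℕ) : Prop :=
  (srcA σ ∧ τ = VbcA σ) ∨ (srcB σ ∧ τ = VbcB σ)

/-- The face operator `∂ᵢ` on a simplex `[a_1 | ⋯ | a_k]` of `K(ℕ,1)`: `∂_0` deletes the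
first entry, `∂_k` the last, and for `0 < i < k`, `∂ᵢ` replaces `a_i, a_{i+1}` by their
sum. -/
def faceN (i : ℕ) (l : List ℕ) : List ℕ :=
  if i = 0 then l.tail
  else if i = l.length then l.dropLast
  else l.take (i - 1) ++ [l.getD (i - 1) 0 + l.getD i 0] ++ l.drop (i + 1)

/-- The breakpoint value of a (not fully dyadic) simplex. -/
def bval (l : List ℕ) : ℕ := l.getD (dyLen l) 0

/-- The edges of the `V∂`-graph of the bit-chipping field: from a source `σ` up to
`V_bc σ`, and from a target `τ` down to any nondegenerate face `∂ᵢτ` that is a source or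
critical simplex (i.e. not a target) not matched to `τ`. -/
def edgeBc (x y : List ℕ) : Prop :=
  (posL x ∧ VbcRel x y) ∨
  ((∃ s, posL s ∧ VbcRel s x) ∧
    ∃ i ≤ x.length, y = faceN i x ∧ posL y ∧ ¬ VbcRel y x ∧ ¬ ∃ s', posL s' ∧ VbcRel s' y)

/-- A double move between target simplices: `τ → τ' = V_bc (∂ⱼ τ)` where `∂ⱼ τ` is a
source not matched to `τ`. -/
def dmTgt (τ τ' : List ℕ) : Prop :=
  (∃ s, posL s ∧ VbcRel s τ) ∧
  ∃ j ≤ τ.length, posL (faceN j τ) ∧ ¬ VbcRel (faceN j τ) τ ∧ VbcRel (faceN j τ) τ'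

section BitChipProof
def isDy (a : ℕ) : Prop := a = 2 ^ Nat.log 2 a

lemma isDy_two_pow (k : ℕ) : isDy (2 ^ k) := by
  rw [isDy, Nat.log_pow one_lt_two]

lemma isDy_pos {a : ℕ} (h : isDy a) : 1 ≤ a := by
  rw [h]; exact Nat.one_le_two_pow

lemma lpow_pos (b : ℕ) : 1 ≤ lpow b := Nat.one_le_two_pow

lemma isDy_lpow (b : ℕ) : isDy (lpow b) := isDy_two_pow _

lemma lpow_le {b : ℕ} (hb : 1 ≤ b) : lpow b ≤ b :=
  Nat.pow_log_le_self 2 (by omega)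

lemma lt_two_lpow (b : ℕ) : b < 2 * lpow b := by
  have := Nat.lt_pow_succ_log_self one_lt_two b
  rw [pow_succ] at this; unfold lpow; omega

lemma ltrim_lt {b : ℕ} (hb : 1 ≤ b) : ltrim b < b :=
  Nat.sub_lt hb (lpow_pos b)

lemma ltrim_lt_lpow (b : ℕ) : ltrim b < lpow b := by
  have := lt_two_lpow b; unfold ltrim; omega

lemma ltrim_pos {b : ℕ} (h1 : 1 ≤ b) (h : ¬ isDy b) : 1 ≤ ltrim b := by
  have h2 := lpow_le h1
  rcases Nat.lt_or_ge (lpow b) b with h3 | h3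
  · unfold ltrim; omega
  · exact absurd (le_antisymm h3 h2 : b = lpow b) h

lemma lpow_ltrim_add {d b : ℕ} (hd : isDy d) (hb1 : 1 ≤ b) (hlt : b < d) :
    lpow (d + b) = d ∧ ltrim (d + b) = b := by
  have hd' : d = 2 ^ Nat.log 2 d := hd
  have hl : Nat.log 2 (d + b) = Nat.log 2 d := by
    apply Nat.log_eq_of_pow_le_of_lt_pow
    · omega
    · rw [pow_succ]; omega
  have : lpow (d + b) = d := by rw [lpow, hl, ← hd]
  exact ⟨this, by unfold ltrim; omega⟩

lemma isDy_iff_lpow {a : ℕ} : isDy a ↔ lpow a = a := by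
  rw [isDy, lpow, eq_comm]

lemma not_isDy_add_gt {d b : ℕ} (hd : isDy d) (hb1 : 1 ≤ b) (hlt : b < d) :
    ¬ isDy (d + b) := by
  intro h
  have h1 := (lpow_ltrim_add hd hb1 hlt).1
  have h2 := isDy_iff_lpow.mp h
  omega

lemma isDy_add_self {a : ℕ} (ha : isDy a) : isDy (a + a) := by
  rw [ha, ← two_mul, ← pow_succ']; exact isDy_two_pow _

lemma ltrim_add_lt {d b : ℕ} (hd : isDy d) (hb : 1 ≤ b) (hlt : d < b) :
    ltrim (d + b) < b := by
  have hdd : d < lpow (d + b) := by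
    have he : d = 2 ^ Nat.log 2 d := hd
    set e := Nat.log 2 d with hE
    have h1 : 2 ^ (e + 1) ≤ d + b := by rw [pow_succ]; omega
    have h2 : e + 1 ≤ Nat.log 2 (d + b) :=
      (Nat.le_log_iff_pow_le one_lt_two (by omega)).mpr h1
    have h3 : 2 ^ (e+1) ≤ 2 ^ Nat.log 2 (d + b) := Nat.pow_le_pow_right (by norm_num) h2
    have : (2:ℕ) ^ e < 2 ^ (e+1) := by rw [pow_succ]; have := Nat.pow_pos (n := e) (show 0 < 2 by norm_num); omega
    unfold lpow; omega
  have := lpow_le (show 1 ≤ d + b by omega)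
  unfold ltrim; omega

lemma isDy_eq_of_add {a b : ℕ} (ha : isDy a) (hb : isDy b) (hab : isDy (a + b)) :
    a = b := by
  rcases lt_trichotomy a b with h | h | h
  · exact absurd (by rwa [add_comm] at hab) (not_isDy_add_gt hb (isDy_pos ha) h)
  · exact h
  · exact absurd hab (not_isDy_add_gt ha (isDy_pos hb) h)

lemma isDy_half {L : ℕ} (h : isDy L) (h2 : 2 ≤ L) : isDy (L / 2) ∧ 2 * (L / 2) = L := by
  obtain ⟨k, hk⟩ : ∃ k, L = 2 ^ k := ⟨_, h⟩
  have hk1 : 1 ≤ k := by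
    rcases Nat.eq_zero_or_pos k with h0 | h0
    · subst h0; simp at hk; omega
    · exact h0
  obtain ⟨m, hm⟩ := Nat.exists_eq_add_of_le hk1
  subst hk
  rw [hm, show 1 + m = m + 1 from by omega, pow_succ]
  have h3 : 2 ^ m * 2 / 2 = 2 ^ m := by omega
  rw [h3]
  exact ⟨isDy_two_pow m, by ring⟩

lemma dyLen_nil : dyLen [] = 0 := rfl

lemma dyLen_cons_pos {a : ℕ} (l : List ℕ) (h : isDy a) :
    dyLen (a :: l) = dyLen l + 1 := by
  unfold dyLen
  rw [List.takeWhile_cons, if_pos (by exact beq_iff_eq.mpr h)]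
  simp

lemma dyLen_cons_neg {a : ℕ} (l : List ℕ) (h : ¬ isDy a) :
    dyLen (a :: l) = 0 := by
  unfold dyLen
  rw [List.takeWhile_cons, if_neg (by simpa [beq_iff_eq, isDy] using h)]
  rfl

lemma dyLen_append_dy {u : List ℕ} (v : List ℕ) (h : ∀ a ∈ u, isDy a) :
    dyLen (u ++ v) = u.length + dyLen v := by
  induction u with
  | nil => simp
  | cons a u ih =>
    rw [List.cons_append, dyLen_cons_pos _ (h a (by simp)),
      ih (fun x hx => h x (by simp [hx]))]
    simp; omega

lemma dyLen_le (l : List ℕ) : dyLen l ≤ l.length := by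
  induction l with
  | nil => simp [dyLen_nil]
  | cons a l ih =>
    by_cases h : isDy a
    · rw [dyLen_cons_pos _ h]; simp; omega
    · rw [dyLen_cons_neg _ h]; simp

lemma isDy_of_mem_take {l : List ℕ} {a : ℕ} (h : a ∈ l.take (dyLen l)) : isDy a := by
  induction l with
  | nil => simp [dyLen_nil] at h
  | cons b l ih =>
    by_cases hb : isDy b
    · rw [dyLen_cons_pos _ hb] at h
      simp [List.take_succ_cons] at h
      rcases h with h | h
      · subst h; exact hb
      · exact ih h
    · rw [dyLen_cons_neg _ hb] at h; simp at h

lemma not_isDy_getD {l : List ℕ} (h : dyLen l < l.length) :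
    ¬ isDy (l.getD (dyLen l) 0) := by
  induction l with
  | nil => simp at h
  | cons a l ih =>
    by_cases ha : isDy a
    · rw [dyLen_cons_pos _ ha] at h ⊢
      simp only [List.getD_cons_succ]
      exact ih (by simp at h; omega)
    · rw [dyLen_cons_neg _ ha] at h ⊢
      simpa using ha

lemma fd_iff {l : List ℕ} : fullyDyadic l ↔ ∀ a ∈ l, isDy a := by
  unfold fullyDyadic
  induction l with
  | nil => simp [dyLen_nil]
  | cons a l ih =>
    by_cases ha : isDy a
    · rw [dyLen_cons_pos _ ha]
      simp only [List.length_cons]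
      constructor
      · intro h b hb
        rcases List.mem_cons.mp hb with h1 | h1
        · subst h1; exact ha
        · exact (ih.mp (by omega)) b h1
      · intro h
        have := ih.mpr (fun b hb => h b (by simp [hb]))
        omega
    · rw [dyLen_cons_neg _ ha]
      simp only [List.length_cons]
      constructor
      · omega
      · intro h; exact absurd (h a (by simp)) ha

lemma decomp_mid {l : List ℕ} {k : ℕ} (h : k < l.length) :
    l = l.take k ++ l.getD k 0 :: l.drop (k + 1) := by
  conv_lhs => rw [← List.take_append_drop k l]
  congr 1
  rw [List.drop_eq_getElem_cons h, List.getD_eq_getElem l 0 h]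

lemma getD_mid (u : List ℕ) (c : ℕ) (v : List ℕ) :
    (u ++ c :: v).getD u.length 0 = c := by
  rw [List.getD_append_right _ _ _ _ (le_refl _)]
  simp

lemma lex_append {u v w : List ℕ} {x y : ℕ} (h : x < y) :
    List.Lex (· < ·) (u ++ x :: v) (u ++ y :: w) := by
  induction u with
  | nil => exact List.Lex.rel h
  | cons a u ih => exact List.Lex.cons ih

lemma dyLen_mid {u : List ℕ} {c : ℕ} (v : List ℕ) (hu : ∀ a ∈ u, isDy a)
    (hc : ¬ isDy c) : dyLen (u ++ c :: v) = u.length := by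
  rw [dyLen_append_dy _ hu, dyLen_cons_neg _ hc]
  omega

lemma bval_mid {u : List ℕ} {c : ℕ} (v : List ℕ) (hu : ∀ a ∈ u, isDy a)
    (hc : ¬ isDy c) : bval (u ++ c :: v) = c := by
  rw [bval, dyLen_mid v hu hc, getD_mid]

lemma take_mid (u : List ℕ) (c : ℕ) (v : List ℕ) :
    (u ++ c :: v).take u.length = u := List.take_left' rfl

lemma drop_mid (u : List ℕ) (c : ℕ) (v : List ℕ) :
    (u ++ c :: v).drop (u.length + 1) = v := by
  rw [show u ++ c :: v = (u ++ [c]) ++ v by simp, List.drop_left' (by simp)]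

lemma vbcA_mid {u : List ℕ} {c : ℕ} (v : List ℕ) (hu : ∀ a ∈ u, isDy a)
    (hc : ¬ isDy c) : VbcA (u ++ c :: v) = u ++ lpow c :: ltrim c :: v := by
  unfold VbcA
  rw [dyLen_mid v hu hc, getD_mid, take_mid, drop_mid]
  simp

lemma srcA_decomp {y : List ℕ} (h : srcA y) :
    ∃ Q c T, y = Q ++ c :: T ∧ Q.length = dyLen y ∧
      (∀ a ∈ Q, isDy a) ∧ ¬ isDy c ∧
      VbcA y = Q ++ lpow c :: ltrim c :: T := by
  obtain ⟨h1, -, -⟩ := h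
  refine ⟨y.take (dyLen y), y.getD (dyLen y) 0, y.drop (dyLen y + 1),
    decomp_mid h1, by rw [List.length_take]; omega,
    fun a ha => isDy_of_mem_take ha, not_isDy_getD h1, ?_⟩
  conv_lhs => rw [decomp_mid h1]
  exact vbcA_mid _ (fun a ha => isDy_of_mem_take ha) (not_isDy_getD h1)

lemma srcB_decomp {y : List ℕ} (h : srcB y) :
    ∃ u L, y = u ++ [L] ∧ isDy L ∧ 2 ≤ L ∧ (∀ a ∈ u, isDy a) ∧
      VbcB y = u ++ [L / 2, L / 2] := by
  obtain ⟨hfd, hne, -, -, h5⟩ := h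
  obtain ⟨u, L, rfl⟩ : ∃ u L, y = u ++ [L] := by
    rcases List.eq_nil_or_concat y with h | ⟨u, L, hy⟩
    · exact absurd h hne
    · rw [List.concat_eq_append] at hy; exact ⟨u, L, hy⟩
  have hlen : (u ++ [L]).length - 1 = u.length := by simp
  have hget : (u ++ [L]).getD ((u ++ [L]).length - 1) 0 = L := by
    rw [hlen, getD_mid]
  have hall := fd_iff.mp hfd
  refine ⟨u, L, rfl, hall L (by simp), by rwa [hget] at h5,
    fun a ha => hall a (by simp [ha]), ?_⟩
  unfold VbcB
  rw [hget, List.dropLast_concat]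

lemma dyLen_all_dy {l : List ℕ} (h : ∀ a ∈ l, isDy a) : dyLen l = l.length :=
  fd_iff.mpr h

-- facts about τ' = Q ++ lpow c :: ltrim c :: T
lemma tf_dy {Q : List ℕ} {c : ℕ} (T : List ℕ) (hQ : ∀ a ∈ Q, isDy a)
    (ht : isDy (ltrim c)) :
    Q.length + 2 ≤ dyLen (Q ++ lpow c :: ltrim c :: T) := by
  rw [dyLen_append_dy _ hQ, dyLen_cons_pos _ (isDy_lpow c), dyLen_cons_pos _ ht]
  omega

lemma tf_ndy {Q : List ℕ} {c : ℕ} (T : List ℕ) (hQ : ∀ a ∈ Q, isDy a)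
    (ht : ¬ isDy (ltrim c)) :
    dyLen (Q ++ lpow c :: ltrim c :: T) = Q.length + 1 ∧
    bval (Q ++ lpow c :: ltrim c :: T) = ltrim c := by
  have h1 : ∀ a ∈ Q ++ [lpow c], isDy a := by
    intro a ha
    rcases List.mem_append.mp ha with h | h
    · exact hQ a h
    · simp at h; subst h; exact isDy_lpow c
  constructor
  · have := dyLen_mid T h1 ht
    simpa using this
  · have := bval_mid (u := Q ++ [lpow c]) T h1 ht
    simpa using this

lemma srcA_dyLen_vbcA {y : List ℕ} (h : srcA y) :
    dyLen y + 1 ≤ dyLen (VbcA y) := by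
  obtain ⟨Q, c, T, rfl, hlen, hQ, hc, hv⟩ := srcA_decomp h
  rw [hv, dyLen_mid T hQ hc, dyLen_append_dy _ hQ, dyLen_cons_pos _ (isDy_lpow c)]
  omega

lemma vbcA_length {y : List ℕ} (h : srcA y) : (VbcA y).length = y.length + 1 := by
  obtain ⟨Q, c, T, rfl, hlen, hQ, hc, hv⟩ := srcA_decomp h
  rw [hv]; simp; omega

lemma vbcB_length {y : List ℕ} (h : srcB y) : (VbcB y).length = y.length + 1 := by
  obtain ⟨u, L, rfl, _, _, _, hv⟩ := srcB_decomp h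
  rw [hv]; simp

lemma vbcB_fd {y : List ℕ} (h : srcB y) : fullyDyadic (VbcB y) := by
  obtain ⟨u, L, rfl, hL, h2, hu, hv⟩ := srcB_decomp h
  rw [hv]
  apply fd_iff.mpr
  intro a ha
  rcases List.mem_append.mp ha with h | h
  · exact hu a h
  · simp at h
    rw [h]
    exact (isDy_half hL h2).1

lemma faceN_length {j : ℕ} {τ : List ℕ} (hj : j ≤ τ.length) (hne : τ ≠ []) :
    (faceN j τ).length = τ.length - 1 := by
  unfold faceN
  split
  · simp
  · split
    · simp
    · rename_i h0 hn
      have hlt : j < τ.length := lt_of_le_of_ne hj hn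
      simp [List.length_take, List.length_drop]
      omega

lemma faceN_zero (τ : List ℕ) : faceN 0 τ = τ.tail := by simp [faceN]

lemma faceN_last {τ : List ℕ} (hne : τ ≠ []) : faceN τ.length τ = τ.dropLast := by
  unfold faceN
  rw [if_neg (by simpa using hne), if_pos rfl]

lemma vbcB_mid (u : List ℕ) (L : ℕ) :
    VbcB (u ++ [L]) = u ++ [L / 2, L / 2] := by
  unfold VbcB
  have hlen : (u ++ [L]).length - 1 = u.length := by simp
  rw [hlen, getD_mid, List.dropLast_concat]

lemma srcB_last {u : List ℕ} {L : ℕ} (h : srcB (u ++ [L])) : 2 ≤ L := by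
  have h5 := h.2.2.2.2
  have hlen : (u ++ [L]).length - 1 = u.length := by simp
  rwa [hlen, getD_mid] at h5

lemma face_mid_decomp {j : ℕ} {τ : List ℕ} (h0 : 0 < j) (hn : j < τ.length) :
    ∃ A a₁ a₂ B, τ = A ++ a₁ :: a₂ :: B ∧ A.length = j - 1 ∧
      faceN j τ = A ++ (a₁ + a₂) :: B := by
  refine ⟨τ.take (j-1), τ.getD (j-1) 0, τ.getD j 0, τ.drop (j+1), ?_, ?_, ?_⟩
  · have e1 := decomp_mid (show j - 1 < τ.length by omega)
    have e2 : τ.drop (j - 1 + 1) = τ.getD j 0 :: τ.drop (j + 1) := by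
      rw [show j - 1 + 1 = j by omega]
      rw [List.drop_eq_getElem_cons hn, List.getD_eq_getElem τ 0 hn]
    rw [e2] at e1
    exact e1
  · rw [List.length_take]; omega
  · unfold faceN
    rw [if_neg (by omega), if_neg (by omega)]
    simp

lemma mem_of_decomp {A B : List ℕ} {a₁ a₂ x : ℕ} (τ : List ℕ)
    (hτ : τ = A ++ a₁ :: a₂ :: B) (h : x ∈ A ∨ x = a₁ ∨ x = a₂ ∨ x ∈ B) : x ∈ τ := by
  subst hτ; rcases h with h | h | h | h <;> simp [h]

theorem key_fd {τ τ' : List ℕ} (hτ : posL τ) (hfd : fullyDyadic τ) {j : ℕ}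
    (hj : j ≤ τ.length) (hnm : ¬ VbcRel (faceN j τ) τ)
    (hrel : VbcRel (faceN j τ) τ') :
    fullyDyadic τ' ∧ (τ'.sum < τ.sum ∨ (τ'.sum = τ.sum ∧ List.Lex (· < ·) τ τ')) := by
  have hall : ∀ a ∈ τ, isDy a := fd_iff.mp hfd
  rcases hrel with ⟨hsA, hv⟩ | ⟨hsB, hv⟩
  · -- srcA face: only possible for a middle face with non-dyadic merged entry
    have hnd : ¬ (∀ a ∈ faceN j τ, isDy a) := by
      intro h
      have h1 := dyLen_all_dy h
      have h2 := hsA.1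
      omega
    by_cases h0 : j = 0
    · subst h0
      rw [faceN_zero] at hnd
      exact absurd (fun a ha => hall a (List.mem_of_mem_tail ha)) hnd
    have hneτ : τ ≠ [] := by
      intro h; subst h; simp at hj; exact h0 hj
    by_cases hN : j = τ.length
    · subst hN
      rw [faceN_last hneτ] at hnd
      exact absurd (fun a ha => hall a (List.mem_of_mem_dropLast ha)) hnd
    have hn : j < τ.length := lt_of_le_of_ne hj hN
    obtain ⟨A, a₁, a₂, B, hτd, hA, hfj⟩ := face_mid_decomp (by omega) hn
    rw [hfj] at hsA hv hnm hnd
    have ha₁ : isDy a₁ := hall _ (mem_of_decomp τ hτd (Or.inr (Or.inl rfl)))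
    have ha₂ : isDy a₂ := hall _ (mem_of_decomp τ hτd (Or.inr (Or.inr (Or.inl rfl))))
    have hA' : ∀ a ∈ A, isDy a := fun a ha => hall a (mem_of_decomp τ hτd (Or.inl ha))
    have hB' : ∀ a ∈ B, isDy a :=
      fun a ha => hall a (mem_of_decomp τ hτd (Or.inr (Or.inr (Or.inr ha))))
    have hc : ¬ isDy (a₁ + a₂) := by
      intro hdy
      apply hnd
      intro a ha
      rcases List.mem_append.mp ha with h | h
      · exact hA' a h
      · rcases List.mem_cons.mp h with h | h
        · rw [h]; exact hdy
        · exact hB' a h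
    have hvv : VbcA (A ++ (a₁ + a₂) :: B) = A ++ lpow (a₁ + a₂) :: ltrim (a₁ + a₂) :: B :=
      vbcA_mid B hA' hc
    have hne12 : a₁ ≠ a₂ := fun h => hc (by rw [h]; exact isDy_add_self ha₂)
    rcases Nat.lt_or_ge a₁ a₂ with hlt | hge
    · have hl := lpow_ltrim_add ha₂ (isDy_pos ha₁) hlt
      have e1 : lpow (a₁ + a₂) = a₂ := by rw [add_comm]; exact hl.1
      have e2 : ltrim (a₁ + a₂) = a₁ := by rw [add_comm]; exact hl.2
      rw [hvv, e1, e2] at hv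
      subst hv
      refine ⟨fd_iff.mpr ?_, Or.inr ⟨?_, ?_⟩⟩
      · intro a ha
        rcases List.mem_append.mp ha with h | h
        · exact hA' a h
        · rcases List.mem_cons.mp h with h | h
          · rw [h]; exact ha₂
          · rcases List.mem_cons.mp h with h | h
            · rw [h]; exact ha₁
            · exact hB' a h
      · rw [hτd]; simp [List.sum_append]; ring
      · rw [hτd]; exact lex_append hlt
    · have hlt : a₂ < a₁ := by omega
      have e1 : lpow (a₁ + a₂) = a₁ := (lpow_ltrim_add ha₁ (isDy_pos ha₂) hlt).1
      have e2 : ltrim (a₁ + a₂) = a₂ := (lpow_ltrim_add ha₁ (isDy_pos ha₂) hlt).2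
      exact absurd (Or.inl ⟨hsA, by rw [hvv, e1, e2, ← hτd]⟩) hnm
  · -- srcB face
    by_cases h0 : j = 0
    · subst h0
      rw [faceN_zero] at hsB hv
      refine ⟨hv ▸ vbcB_fd hsB, Or.inl ?_⟩
      obtain ⟨u, L, hu, hLd, hL2, -, hvb⟩ := srcB_decomp hsB
      cases τ with
      | nil => exact absurd rfl hsB.2.1
      | cons t rest =>
        simp only [List.tail_cons] at hu hvb hv
        have hsum : τ'.sum = rest.sum := by
          rw [hv, hvb, hu]
          simp [List.sum_append]
          have := (isDy_half hLd hL2).2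
          omega
        have ht : 1 ≤ t := hτ t (by simp)
        rw [hsum]
        simp [List.sum_cons]
        omega
    have hneτ : τ ≠ [] := by
      intro h; subst h; simp at hj; exact h0 hj
    by_cases hN : j = τ.length
    · subst hN
      rw [faceN_last hneτ] at hsB hv
      refine ⟨hv ▸ vbcB_fd hsB, Or.inl ?_⟩
      obtain ⟨u, L, hu, hLd, hL2, -, hvb⟩ := srcB_decomp hsB
      have hτe : τ = τ.dropLast ++ [τ.getLast hneτ] :=
        (List.dropLast_append_getLast hneτ).symm
      have hg : 1 ≤ τ.getLast hneτ := hτ _ (List.getLast_mem hneτ)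
      rw [hv, hvb]
      conv_rhs => rw [hτe, hu]
      simp [List.sum_append]
      have := (isDy_half hLd hL2).2
      omega
    have hn : j < τ.length := lt_of_le_of_ne hj hN
    obtain ⟨A, a₁, a₂, B, hτd, hA, hfj⟩ := face_mid_decomp (by omega) hn
    rw [hfj] at hsB hv hnm
    have hally : ∀ a ∈ A ++ (a₁ + a₂) :: B, isDy a := fd_iff.mp hsB.1
    have ha₁ : isDy a₁ := hall _ (mem_of_decomp τ hτd (Or.inr (Or.inl rfl)))
    have ha₂ : isDy a₂ := hall _ (mem_of_decomp τ hτd (Or.inr (Or.inr (Or.inl rfl))))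
    have hA' : ∀ a ∈ A, isDy a := fun a ha => hall a (mem_of_decomp τ hτd (Or.inl ha))
    have hB' : ∀ a ∈ B, isDy a :=
      fun a ha => hall a (mem_of_decomp τ hτd (Or.inr (Or.inr (Or.inr ha))))
    have hcdy : isDy (a₁ + a₂) := hally _ (by simp)
    have h12 : a₁ = a₂ := isDy_eq_of_add ha₁ ha₂ hcdy
    rcases List.eq_nil_or_concat B with hB | ⟨B₀, L, hBc⟩
    · -- merged the last two entries: matched, contradiction
      subst hB
      have hy : A ++ [a₁ + a₂] = A ++ (a₁ + a₂) :: ([] : List ℕ) := by simp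
      have hvb : VbcB (A ++ (a₁ + a₂) :: ([] : List ℕ)) = A ++ [(a₁+a₂)/2, (a₁+a₂)/2] := by
        rw [← hy]; exact vbcB_mid A (a₁ + a₂)
      have hhalf : (a₁ + a₂) / 2 = a₁ := by omega
      exact absurd (Or.inr ⟨hsB, by rw [hvb, hhalf, hτd, h12]⟩) hnm
    · rw [List.concat_eq_append] at hBc
      subst hBc
      have hy : A ++ (a₁ + a₂) :: (B₀ ++ [L]) = (A ++ (a₁ + a₂) :: B₀) ++ [L] := by simp
      rw [hy] at hsB hv
      have hL2 : 2 ≤ L := srcB_last hsB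
      have hLd : isDy L := hB' L (by simp)
      have hvb := vbcB_mid (A ++ (a₁ + a₂) :: B₀) L
      rw [hvb] at hv
      subst hv
      have heven := (isDy_half hLd hL2).2
      refine ⟨fd_iff.mpr ?_, Or.inr ⟨?_, ?_⟩⟩
      · intro a ha
        rcases List.mem_append.mp ha with h | h
        · rcases List.mem_append.mp h with h | h
          · exact hA' a h
          · rcases List.mem_cons.mp h with h | h
            · rw [h]; exact hcdy
            · exact hB' a (by simp [h])
        · simp at h; rw [h]; exact (isDy_half hLd hL2).1
      · rw [hτd]; simp [List.sum_append]; omega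
      · rw [hτd]
        have h1 : 1 ≤ a₂ := hτ a₂ (mem_of_decomp τ hτd (Or.inr (Or.inr (Or.inl rfl))))
        have : List.Lex (· < ·) (A ++ a₁ :: (a₂ :: B₀ ++ [L]))
            (A ++ (a₁ + a₂) :: (B₀ ++ [L / 2, L / 2])) := lex_append (by omega)
        simpa using this

lemma cancel3 {A A' B B' : List ℕ} {x y x' y' : ℕ}
    (h : A ++ x :: y :: B = A' ++ x' :: y' :: B') (hl : A.length = A'.length) :
    A = A' ∧ x = x' ∧ y = y' ∧ B = B' := by
  obtain ⟨h1, h2⟩ := List.append_inj h hl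
  injection h2 with h2a h2b
  injection h2b with h2c h2d
  exact ⟨h1, h2a, h2c, h2d⟩

lemma face_mid_decomp' {j : ℕ} {τ : List ℕ} (h0 : 0 < j) (hn : j < τ.length) :
    ∃ A a₁ a₂ B, τ = A ++ a₁ :: a₂ :: B ∧ A.length = j - 1 ∧ A = τ.take (j - 1) ∧
      faceN j τ = A ++ (a₁ + a₂) :: B := by
  refine ⟨τ.take (j-1), τ.getD (j-1) 0, τ.getD j 0, τ.drop (j+1), ?_, ?_, rfl, ?_⟩
  · have e1 := decomp_mid (show j - 1 < τ.length by omega)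
    have e2 : τ.drop (j - 1 + 1) = τ.getD j 0 :: τ.drop (j + 1) := by
      rw [show j - 1 + 1 = j by omega]
      rw [List.drop_eq_getElem_cons hn, List.getD_eq_getElem τ 0 hn]
    rw [e2] at e1
    exact e1
  · rw [List.length_take]; omega
  · unfold faceN
    rw [if_neg (by omega), if_neg (by omega)]
    simp

lemma case12 {Q : List ℕ} {c b : ℕ} (T : List ℕ) (hQ : ∀ a ∈ Q, isDy a)
    (hc : ¬ isDy c) (hlt : ltrim c < b) :
    Q.length + 1 < dyLen (Q ++ lpow c :: ltrim c :: T) ∨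
    (dyLen (Q ++ lpow c :: ltrim c :: T) = Q.length + 1 ∧
      bval (Q ++ lpow c :: ltrim c :: T) < b) := by
  by_cases ht : isDy (ltrim c)
  · left; have := tf_dy T hQ ht; omega
  · right
    obtain ⟨h1, h2⟩ := tf_ndy T hQ ht
    exact ⟨h1, by omega⟩

theorem key_nfd {τ τ' : List ℕ} (hτ : posL τ) (hnfd : ¬ fullyDyadic τ) {j : ℕ}
    (hj : j ≤ τ.length) (hnm : ¬ VbcRel (faceN j τ) τ)
    (hrel : VbcRel (faceN j τ) τ') (hlen : τ'.length = τ.length) :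
    dyLen τ < dyLen τ' ∨ (dyLen τ' = dyLen τ ∧ bval τ' < bval τ) ∨
    (dyLen τ' = dyLen τ ∧ bval τ' = bval τ ∧
      List.Lex (· < ·) (τ.take (dyLen τ)) (τ'.take (dyLen τ'))) := by
  have hqn : dyLen τ < τ.length := lt_of_le_of_ne (dyLen_le τ) hnfd
  have hτd := decomp_mid hqn
  set D := τ.take (dyLen τ) with hDdef
  set b := τ.getD (dyLen τ) 0 with hbdef
  set R := τ.drop (dyLen τ + 1) with hRdef
  have hD : ∀ a ∈ D, isDy a := fun a ha => isDy_of_mem_take ha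
  have hb : ¬ isDy b := not_isDy_getD hqn
  have hDlen : D.length = dyLen τ := by
    rw [hDdef, List.length_take]; omega
  have hb1 : 1 ≤ b := hτ b (by rw [hτd]; simp)
  have hq : dyLen τ = D.length := hDlen.symm
  have hbv : bval τ = b := by conv_lhs => rw [hτd]
                              rw [bval_mid R hD hb]
  have htake : τ.take (dyLen τ) = D := rfl
  rcases hrel with ⟨hsA, hv⟩ | ⟨hsB, hv⟩
  · by_cases hq2 : dyLen τ ≤ dyLen (faceN j τ)
    · left
      have h1 := srcA_dyLen_vbcA hsA
      rw [← hv] at h1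
      omega
    · push_neg at hq2
      by_cases h0 : j = 0
      · subst h0
        rw [faceN_zero] at hsA hv hnm hq2
        cases hDe : D with
        | nil => rw [hDe] at hq; simp at hq; omega
        | cons d D' =>
          have hτd' : τ = d :: (D' ++ b :: R) := by rw [hτd, hDe]; simp
          have hy : τ.tail = D' ++ b :: R := by rw [hτd']; rfl
          rw [hy] at hsA hv
          have hD' : ∀ a ∈ D', isDy a := fun a ha => hD a (by rw [hDe]; simp [ha])
          rw [vbcA_mid R hD' hb] at hv
          have hDl : D'.length + 1 = D.length := by rw [hDe]; simp
          rcases case12 R hD' hb (ltrim_lt hb1) with h | h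
          · left; rw [hv]; omega
          · right; left
            rw [hv]
            exact ⟨by omega, by rw [hbv]; exact h.2⟩
      · have hneτ : τ ≠ [] := by rw [hτd]; simp
        by_cases hN : j = τ.length
        · exfalso
          subst hN
          rw [faceN_last hneτ] at hq2
          rcases List.eq_nil_or_concat R with hR | ⟨R₀, r, hRc⟩
          · rw [hR] at hτd
            have : τ.dropLast = D := by rw [hτd]; exact List.dropLast_concat
            rw [this, dyLen_all_dy hD] at hq2
            omega
          · rw [List.concat_eq_append] at hRc
            rw [hRc] at hτd
            have hre : τ = (D ++ b :: R₀) ++ [r] := by rw [hτd]; simp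
            have : τ.dropLast = D ++ b :: R₀ := by rw [hre]; exact List.dropLast_concat
            rw [this, dyLen_mid R₀ hD hb] at hq2
            omega
        · have hn : j < τ.length := lt_of_le_of_ne hj hN
          obtain ⟨A, a₁, a₂, B, hτd2, hA, hAt, hfj⟩ := face_mid_decomp' (by omega) hn
          rw [hfj] at hsA hv hnm hq2
          rcases lt_trichotomy (j - 1) D.length with hi | hi | hi
          · -- merge inside the dyadic prefix
            by_cases hi2 : j - 1 + 1 = D.length
            · -- merge last prefix entry with b
              have hDdec : D = D.take (j-1) ++ [D.getD (j-1) 0] := by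
                have e1 := decomp_mid (l := D) (k := j-1) hi
                have e2 : D.drop (j - 1 + 1) = [] := by
                  rw [hi2]; exact List.drop_length
                rw [e2] at e1; exact e1
              have hτd3 : τ = D.take (j-1) ++ D.getD (j-1) 0 :: b :: R := by
                rw [hτd]; conv_lhs => rw [hDdec]
                simp
              obtain ⟨hA2, ha1, ha2, hB2⟩ := cancel3 (hτd2.symm.trans hτd3)
                (by rw [hA, List.length_take]; omega)
              have hddy : isDy a₁ := by
                rw [ha1]
                exact hD _ (by rw [List.getD_eq_getElem D 0 hi]; exact List.getElem_mem hi)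
              have hApre : ∀ a ∈ A, isDy a := by
                intro a ha; rw [hA2] at ha
                exact hD a (List.take_subset _ _ ha)
              rw [ha2, hB2] at hsA hv hnm hτd2 hq2
              by_cases hcdy : isDy (a₁ + b)
              · exfalso
                have : dyLen (A ++ (a₁ + b) :: R) = A.length + dyLen ((a₁+b) :: R) :=
                  dyLen_append_dy _ hApre
                rw [dyLen_cons_pos _ hcdy] at this
                have hAl : A.length = D.length - 1 := by rw [hA]; omega
                omega
              · have hVA := vbcA_mid R hApre hcdy
                rcases lt_trichotomy a₁ b with hlt | heq | hgt
                · rw [hVA] at hv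
                  have hAl : A.length + 1 + 1 = D.length + 1 := by rw [hA]; omega
                  rcases case12 R hApre hcdy (ltrim_add_lt hddy hb1 hlt) with h | h
                  · left; rw [hv]; omega
                  · right; left
                    rw [hv]
                    exact ⟨by omega, by rw [hbv]; exact h.2⟩
                · exact absurd (heq ▸ hddy) hb
                · exfalso
                  apply hnm
                  left
                  refine ⟨hsA, ?_⟩
                  rw [hVA, (lpow_ltrim_add hddy hb1 hgt).1, (lpow_ltrim_add hddy hb1 hgt).2]
                  exact hτd2
            · -- merge two entries strictly inside the dyadic prefix
              have hj1 : j - 1 + 1 < D.length := by omega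
              have e1 := decomp_mid (l := D) (k := j-1) hi
              have e2 : D.drop (j - 1 + 1) =
                  D.getD (j-1+1) 0 :: D.drop (j-1+1+1) := by
                rw [List.drop_eq_getElem_cons hj1, List.getD_eq_getElem D 0 hj1]
              rw [e2] at e1
              have hm₁ : isDy (D.getD (j-1) 0) :=
                hD _ (by rw [List.getD_eq_getElem D 0 hi]; exact List.getElem_mem hi)
              have hm₂ : isDy (D.getD (j-1+1) 0) :=
                hD _ (by rw [List.getD_eq_getElem D 0 hj1]; exact List.getElem_mem hj1)
              set d₁ := D.getD (j-1) 0
              set d₂ := D.getD (j-1+1) 0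
              set D₂ := D.drop (j-1+1+1) with hD₂def
              have hτd3 : τ = D.take (j-1) ++ d₁ :: d₂ :: (D₂ ++ b :: R) := by
                rw [hτd]; conv_lhs => rw [e1]
                simp
              obtain ⟨hA2, ha1, ha2, hB2⟩ := cancel3 (hτd2.symm.trans hτd3)
                (by rw [hA, List.length_take]; omega)
              have hd₁ : isDy a₁ := by rw [ha1]; exact hm₁
              have hd₂ : isDy a₂ := by rw [ha2]; exact hm₂
              have hApre : ∀ a ∈ A, isDy a := by
                intro a ha; rw [hA2] at ha
                exact hD a (List.take_subset _ _ ha)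
              have hD₂pre : ∀ a ∈ D₂, isDy a := by
                intro a ha
                exact hD a (List.drop_subset _ _ ha)
              rw [hB2] at hsA hv hnm hτd2
              have hlenA : A.length = j - 1 := hA
              have hlD₂ : A.length + 2 + D₂.length = D.length := by
                rw [hA2, hD₂def]
                simp [List.length_take, List.length_drop]
                omega
              by_cases h12 : a₁ = a₂
              · -- equal pair: merged entry is dyadic
                have hcdy : isDy (a₁ + a₂) := by rw [h12]; exact isDy_add_self hd₂
                have hre : A ++ (a₁ + a₂) :: (D₂ ++ b :: R) =
                    (A ++ (a₁ + a₂) :: D₂) ++ b :: R := by simp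
                rw [hre] at hsA hv
                have hQpre : ∀ a ∈ A ++ (a₁ + a₂) :: D₂, isDy a := by
                  intro a ha
                  rcases List.mem_append.mp ha with h | h
                  · exact hApre a h
                  · rcases List.mem_cons.mp h with h | h
                    · rw [h]; exact hcdy
                    · exact hD₂pre a h
                rw [vbcA_mid R hQpre hb] at hv
                have hQl : (A ++ (a₁ + a₂) :: D₂).length + 1 = D.length := by
                  simp; omega
                rcases case12 R hQpre hb (ltrim_lt hb1) with h | h
                · left; rw [hv]; omega
                · right; left
                  rw [hv]
                  exact ⟨by omega, by rw [hbv]; exact h.2⟩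
              · -- unequal pair
                have hcnd : ¬ isDy (a₁ + a₂) := by
                  rcases lt_or_gt_of_ne h12 with hlt | hgt
                  · rw [add_comm]; exact not_isDy_add_gt hd₂ (isDy_pos hd₁) hlt
                  · exact not_isDy_add_gt hd₁ (isDy_pos hd₂) hgt
                have hVA := vbcA_mid (D₂ ++ b :: R) hApre hcnd
                rcases lt_or_gt_of_ne h12 with hlt | hgt
                · -- swap case: lexicographic increase
                  have hl1 : lpow (a₁ + a₂) = a₂ := by
                    rw [add_comm]; exact (lpow_ltrim_add hd₂ (isDy_pos hd₁) hlt).1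
                  have hl2 : ltrim (a₁ + a₂) = a₁ := by
                    rw [add_comm]; exact (lpow_ltrim_add hd₂ (isDy_pos hd₁) hlt).2
                  rw [hVA, hl1, hl2] at hv
                  have hre : A ++ a₂ :: a₁ :: (D₂ ++ b :: R) =
                      (A ++ a₂ :: a₁ :: D₂) ++ b :: R := by simp
                  rw [hre] at hv
                  have hQpre : ∀ a ∈ A ++ a₂ :: a₁ :: D₂, isDy a := by
                    intro a ha
                    rcases List.mem_append.mp ha with h | h
                    · exact hApre a h
                    · rcases List.mem_cons.mp h with h | h
                      · rw [h]; exact hd₂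
                      · rcases List.mem_cons.mp h with h | h
                        · rw [h]; exact hd₁
                        · exact hD₂pre a h
                  have hQl : (A ++ a₂ :: a₁ :: D₂).length = D.length := by
                    simp; omega
                  right; right
                  have hdy' : dyLen τ' = (A ++ a₂ :: a₁ :: D₂).length := by
                    rw [hv]; exact dyLen_mid R hQpre hb
                  refine ⟨by omega, ?_, ?_⟩
                  · rw [hbv, hv, bval_mid R hQpre hb]
                  · have ht' : τ'.take (dyLen τ') = A ++ a₂ :: a₁ :: D₂ := by
                      rw [hdy', hv]; exact take_mid _ b R
                    rw [ht']
                    have hDe : D = A ++ a₁ :: a₂ :: D₂ := by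
                      have h := hτd.symm.trans hτd2
                      rw [show A ++ a₁ :: a₂ :: (D₂ ++ b :: R) =
                        (A ++ a₁ :: a₂ :: D₂) ++ b :: R from by simp] at h
                      exact (List.append_inj h (by simp; omega)).1
                    rw [hDe]
                    have : List.Lex (· < ·) (A ++ a₁ :: (a₂ :: D₂))
                        (A ++ a₂ :: (a₁ :: D₂)) := lex_append hlt
                    simpa using this
                · -- matched: contradiction
                  exfalso
                  apply hnm
                  left
                  refine ⟨hsA, ?_⟩
                  rw [hVA, (lpow_ltrim_add hd₁ (isDy_pos hd₂) hgt).1,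
                    (lpow_ltrim_add hd₁ (isDy_pos hd₂) hgt).2]
                  exact hτd2
          · -- merge b with the entry after it: dyadic length of face ≥ q, contradiction
            exfalso
            have hA2 : A = D := by
              rw [hAt, hτd, hi]
              exact take_mid D b R
            obtain ⟨ha1, hB2⟩ : b = a₁ ∧ R = a₂ :: B := by
              have h := hτd.symm.trans hτd2
              rw [hA2] at h
              obtain ⟨h1, h2⟩ := List.append_inj h rfl
              injection h2 with h2a h2b
              exact ⟨h2a, h2b⟩
            rw [← ha1] at hq2
            have hAl : A.length = D.length := by rw [hA2]
            by_cases hcdy : isDy (b + a₂)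
            · have hthis : dyLen (A ++ (b + a₂) :: B) = A.length + dyLen ((b + a₂) :: B) :=
                dyLen_append_dy _ (fun a ha => hD a (hA2 ▸ ha))
              rw [dyLen_cons_pos _ hcdy] at hthis
              omega
            · have hthis : dyLen (A ++ (b + a₂) :: B) = A.length :=
                dyLen_mid B (fun a ha => hD a (hA2 ▸ ha)) hcdy
              omega
          · -- merge strictly after the breakpoint: dyadic length of face = q, contradiction
            exfalso
            have hA2 : A = D ++ b :: R.take (j - 1 - D.length - 1) := by
              rw [hAt, hτd, List.take_append,
                List.take_of_length_le (by omega),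
                show j - 1 - D.length = (j - 1 - D.length - 1) + 1 by omega,
                List.take_succ_cons,
                show j - 1 - D.length - 1 + 1 - 1 = j - 1 - D.length - 1 from by omega]
            have : dyLen (A ++ (a₁ + a₂) :: B) =
                dyLen ((D ++ b :: (R.take (j - 1 - D.length - 1) ++ (a₁ + a₂) :: B))) := by
              rw [hA2]; simp
            rw [this, dyLen_mid _ hD hb] at hq2
            omega
  · -- srcB face: τ' fully dyadic
    left
    have hfd' : fullyDyadic τ' := hv ▸ vbcB_fd hsB
    rw [fullyDyadic] at hfd'
    omega

lemma getD_mid2 (u : List ℕ) (c d : ℕ) (v : List ℕ) :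
    (u ++ c :: d :: v).getD (u.length + 1) 0 = d := by
  have := getD_mid (u ++ [c]) d v
  simpa using this

lemma tgt_not_src {s x : List ℕ} (hs : posL s) (hrel : VbcRel s x) :
    ¬ (srcA x ∨ srcB x) := by
  rcases hrel with ⟨hsA, hv⟩ | ⟨hsB, hv⟩
  · obtain ⟨U, c, V, hsd, hUl, hU, hc, hva⟩ := srcA_decomp hsA
    subst hv
    rw [hva]
    have hc1 : 1 ≤ c := hs c (by rw [hsd]; simp)
    have ht1 : 1 ≤ ltrim c := ltrim_pos hc1 hc
    have htp : ltrim c < lpow c := ltrim_lt_lpow c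
    have hg1 : (U ++ lpow c :: ltrim c :: V).getD U.length 0 = lpow c := getD_mid _ _ _
    have hg2 : (U ++ lpow c :: ltrim c :: V).getD (U.length + 1) 0 = ltrim c :=
      getD_mid2 _ _ _ _
    have hlenx : (U ++ lpow c :: ltrim c :: V).length = U.length + 2 + V.length := by
      simp; omega
    by_cases hdt : isDy (ltrim c)
    · have hdyx : dyLen (U ++ lpow c :: ltrim c :: V) = U.length + 2 + dyLen V := by
        rw [dyLen_append_dy _ hU, dyLen_cons_pos _ (isDy_lpow c), dyLen_cons_pos _ hdt]
        omega
      rintro (hA | hB)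
      · have := hA.2.1 U.length (by omega)
        rw [hg1, hg2] at this
        omega
      · rcases List.eq_nil_or_concat V with hV | ⟨V₀, r, hVc⟩
        · subst hV
          have := hB.2.2.2.1 U.length (by rw [hlenx]; simp)
          rw [hg1, hg2] at this
          omega
        · have hVl : 1 ≤ V.length := by rw [hVc]; simp
          have := hB.2.2.1 U.length (by omega)
          rw [hg1, hg2] at this
          omega
    · have hdyx : dyLen (U ++ lpow c :: ltrim c :: V) = U.length + 1 := by
        have h1 : ∀ a ∈ U ++ [lpow c], isDy a := by
          intro a ha
          rcases List.mem_append.mp ha with h | h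
          · exact hU a h
          · simp at h; rw [h]; exact isDy_lpow c
        have := dyLen_mid (u := U ++ [lpow c]) V h1 hdt
        simpa using this
      rintro (hA | hB)
      · have := hA.2.2 U.length (by omega)
        rw [hdyx, hg1, hg2] at this
        omega
      · have := hB.1
        rw [fullyDyadic, hdyx, hlenx] at this
        omega
  · obtain ⟨w, L, hsd, hL, hL2, hw, hvb⟩ := srcB_decomp hsB
    subst hv
    rw [hvb]
    have hm : isDy (L / 2) := (isDy_half hL hL2).1
    have hfd : fullyDyadic (w ++ [L/2, L/2]) := by
      apply dyLen_all_dy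
      intro a ha
      rcases List.mem_append.mp ha with h | h
      · exact hw a h
      · have : a = L / 2 := by simpa using h
        rw [this]; exact hm
    rintro (hA | hB)
    · have := hA.1
      rw [fullyDyadic] at hfd
      omega
    · have hlx : (w ++ [L/2, L/2]).length = w.length + 2 := by simp
      have := hB.2.2.2.1 w.length (by omega)
      have hg1 : (w ++ L/2 :: L/2 :: ([]:List ℕ)).getD w.length 0 = L/2 := getD_mid _ _ _
      have hg2 : (w ++ L/2 :: L/2 :: ([]:List ℕ)).getD (w.length + 1) 0 = L/2 :=
        getD_mid2 _ _ _ _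
      try simp only [show w ++ [L/2, L/2] = w ++ L/2 :: L/2 :: ([]:List ℕ) from rfl] at this
      rw [hg1, hg2] at this
      omega

lemma posL_vbc {s x : List ℕ} (hs : posL s) (hrel : VbcRel s x) : posL x := by
  rcases hrel with ⟨hsA, hv⟩ | ⟨hsB, hv⟩
  · obtain ⟨U, c, V, hsd, hUl, hU, hc, hva⟩ := srcA_decomp hsA
    subst hv
    rw [hva]
    have hc1 : 1 ≤ c := hs c (by rw [hsd]; simp)
    intro a ha
    rcases List.mem_append.mp ha with h | h
    · exact hs a (by rw [hsd]; simp [h])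
    · rcases List.mem_cons.mp h with h | h
      · rw [h]; exact lpow_pos c
      · rcases List.mem_cons.mp h with h | h
        · rw [h]; exact ltrim_pos hc1 hc
        · exact hs a (by rw [hsd]; simp [h])
  · obtain ⟨w, L, hsd, hL, hL2, hw, hvb⟩ := srcB_decomp hsB
    subst hv
    rw [hvb]
    intro a ha
    rcases List.mem_append.mp ha with h | h
    · exact hs a (by rw [hsd]; simp [h])
    · have : a = L / 2 := by simpa using h
      rw [this]
      have := (isDy_half hL hL2).2
      omega

lemma src_ne_nil {y : List ℕ} (h : srcA y ∨ srcB y) : y ≠ [] := by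
  rcases h with h | h
  · intro he; rw [he] at h; have := h.1; simp [dyLen] at this
  · exact h.2.1

lemma key_len {τ τ' : List ℕ} {j : ℕ} (hj : j ≤ τ.length)
    (hrel : VbcRel (faceN j τ) τ') : τ'.length = τ.length := by
  have hsrc : srcA (faceN j τ) ∨ srcB (faceN j τ) := by
    rcases hrel with ⟨h, -⟩ | ⟨h, -⟩
    · exact Or.inl h
    · exact Or.inr h
  have hyne : faceN j τ ≠ [] := src_ne_nil hsrc
  have hτne : τ ≠ [] := by
    intro he
    apply hyne
    subst he
    simp at hj
    subst hj
    rfl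
  have hfl : (faceN j τ).length = τ.length - 1 := faceN_length hj hτne
  have hτl : 1 ≤ τ.length := by
    cases τ
    · exact absurd rfl hτne
    · simp
  rcases hrel with ⟨h, hv⟩ | ⟨h, hv⟩
  · rw [hv, vbcA_length h, hfl]; omega
  · rw [hv, vbcB_length h, hfl]; omega

def flex : List ℕ → List ℕ → Prop := flip (List.Lex (· < ·))

instance : IsTrans (List ℕ) flex :=
  ⟨fun a b c h1 h2 => List.lex_trans (fun h h' => Nat.lt_trans h h') h2 h1⟩

instance : IsIrrefl (List ℕ) flex :=
  ⟨fun a h => Std.Irrefl.irrefl (r := List.Lex (α := ℕ) (· < ·)) a h⟩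

abbrev Mea : Type := ℕ × ℕ × ℕ × List ℕ × ℕ

def Rm : Mea → Mea → Prop :=
  Prod.Lex (· < ·) (Prod.Lex (· < ·) (Prod.Lex (· < ·) (Prod.Lex flex (· < ·))))

instance Rm_trans : IsTrans Mea Rm := by unfold Rm; infer_instance
instance Rm_irrefl : IsIrrefl Mea Rm := by unfold Rm; infer_instance

noncomputable def tup (τ : List ℕ) : ℕ × ℕ × List ℕ := by
  classical
  exact (τ.length - dyLen τ, if fullyDyadic τ then τ.sum else bval τ,
    if fullyDyadic τ then τ else τ.take (dyLen τ))

noncomputable def vbc (x : List ℕ) : List ℕ := by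
  classical
  exact if srcA x then VbcA x else VbcB x

lemma not_srcA_of_srcB {x : List ℕ} (h : srcB x) : ¬ srcA x := by
  intro hA
  have h1 := hA.1
  have h2 := h.1
  rw [fullyDyadic] at h2
  omega

lemma vbc_eq {x y : List ℕ} (h : VbcRel x y) : y = vbc x := by
  classical
  rcases h with ⟨hA, hv⟩ | ⟨hB, hv⟩
  · rw [hv, vbc, if_pos hA]
  · rw [hv, vbc, if_neg (not_srcA_of_srcB hB)]

lemma vbcRel_vbc {x : List ℕ} (h : srcA x ∨ srcB x) : VbcRel x (vbc x) := by
  classical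
  rcases h with hA | hB
  · exact Or.inl ⟨hA, by rw [vbc, if_pos hA]⟩
  · exact Or.inr ⟨hB, by rw [vbc, if_neg (not_srcA_of_srcB hB)]⟩

noncomputable def phi (x : List ℕ) : Mea := by
  classical
  exact if ∃ s, posL s ∧ VbcRel s x then
    (1, (tup x).1, (tup x).2.1, (tup x).2.2, 0)
  else if posL x ∧ (srcA x ∨ srcB x) then
    (1, (tup (vbc x)).1, (tup (vbc x)).2.1, (tup (vbc x)).2.2, 1)
  else (0, 0, 0, [], 0)

lemma tup_dec {τ τ' : List ℕ} (hτ : posL τ) {j : ℕ} (hj : j ≤ τ.length)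
    (hnm : ¬ VbcRel (faceN j τ) τ) (hrel : VbcRel (faceN j τ) τ') (t t' : ℕ) :
    Rm (1, (tup τ').1, (tup τ').2.1, (tup τ').2.2, t')
       (1, (tup τ).1, (tup τ).2.1, (tup τ).2.2, t) := by
  classical
  have hlen := key_len hj hrel
  have hle := dyLen_le τ
  have hle' := dyLen_le τ'
  unfold Rm tup
  simp only [Prod.lex_def]
  by_cases hfd : fullyDyadic τ
  · obtain ⟨hfd', hd⟩ := key_fd hτ hfd hj hnm hrel
    rw [if_pos hfd, if_pos hfd', if_pos hfd, if_pos hfd']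
    right
    refine ⟨trivial, ?_⟩
    right
    have e1 : τ'.length - dyLen τ' = τ.length - dyLen τ := by
      rw [fullyDyadic] at hfd hfd'
      omega
    refine ⟨by simpa using e1, ?_⟩
    rcases hd with h | ⟨h1, h2⟩
    · left; simpa using h
    · right
      refine ⟨by simpa using h1, ?_⟩
      left
      simpa [flex, flip] using h2
  · rcases key_nfd hτ hfd hj hnm hrel hlen with h | ⟨h1, h2⟩ | ⟨h1, h2, h3⟩
    · right
      refine ⟨trivial, ?_⟩
      left
      omega
    · have hlt : dyLen τ < τ.length := lt_of_le_of_ne hle hfd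
      have hfd' : ¬ fullyDyadic τ' := by rw [fullyDyadic]; omega
      rw [if_neg hfd, if_neg hfd', if_neg hfd, if_neg hfd']
      right
      refine ⟨trivial, ?_⟩
      right
      refine ⟨by omega, ?_⟩
      left
      simpa using h2
    · have hlt : dyLen τ < τ.length := lt_of_le_of_ne hle hfd
      have hfd' : ¬ fullyDyadic τ' := by rw [fullyDyadic]; omega
      rw [if_neg hfd, if_neg hfd', if_neg hfd, if_neg hfd']
      right
      refine ⟨trivial, ?_⟩
      right
      refine ⟨by omega, ?_⟩
      right
      refine ⟨by simpa using h2, ?_⟩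
      left
      simpa [flex, flip] using h3

lemma edge_dec {x y : List ℕ} (h : edgeBc x y) : Rm (phi y) (phi x) := by
  classical
  rcases h with ⟨hpos, hrel⟩ | ⟨⟨s, hs, hsrel⟩, i, hi, hyeq, hypos, hnm, hnt⟩
  · have hsrc : srcA x ∨ srcB x := by
      rcases hrel with ⟨h, -⟩ | ⟨h, -⟩
      exacts [Or.inl h, Or.inr h]
    have hntx : ¬ ∃ s, posL s ∧ VbcRel s x := by
      rintro ⟨s, hs1, hs2⟩; exact tgt_not_src hs1 hs2 hsrc
    have hty : ∃ s, posL s ∧ VbcRel s y := ⟨x, hpos, hrel⟩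
    have hyv : y = vbc x := vbc_eq hrel
    unfold phi
    rw [if_pos hty, if_neg hntx, if_pos ⟨hpos, hsrc⟩, ← hyv]
    unfold Rm
    simp only [Prod.lex_def]
    right
    exact ⟨trivial, Or.inr ⟨trivial, Or.inr ⟨trivial, Or.inr ⟨trivial, by norm_num⟩⟩⟩⟩
  · have htx : ∃ s, posL s ∧ VbcRel s x := ⟨s, hs, hsrel⟩
    subst hyeq
    unfold phi
    rw [if_pos htx, if_neg hnt]
    by_cases hsrc : srcA (faceN i x) ∨ srcB (faceN i x)
    · rw [if_pos ⟨hypos, hsrc⟩]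
      exact tup_dec (posL_vbc hs hsrel) hi hnm (vbcRel_vbc hsrc) 0 1
    · rw [if_neg (fun hh => hsrc hh.2)]
      exact Prod.Lex.left _ _ (by norm_num)

theorem acyclic : ∀ x : List ℕ, ¬ Relation.TransGen edgeBc x x := by
  intro x hx
  have h2 : Relation.TransGen (fun a b => Rm (phi b) (phi a)) x x :=
    Relation.TransGen.mono (fun a b h => edge_dec h) _ _ hx
  have ht : Transitive (fun a b : List ℕ => Rm (phi b) (phi a)) :=
    fun a b c h1 h2 => IsTrans.trans (r := Rm) _ _ _ h2 h1
  haveI : IsTrans (List ℕ) (fun a b : List ℕ => Rm (phi b) (phi a)) := ⟨fun _ _ _ h1 h2 => ht h1 h2⟩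
  rw [Relation.transGen_eq_self] at h2
  exact Std.Irrefl.irrefl (r := Rm) (phi x) h2

end BitChipProof

/-- Acyclicity of the bit-chipping field: the `V∂`-graph contains no directed cycle.
Concretely, in each double move `τ → τ'` between targets, for `τ` not fully dyadic
either the dyadic length `q` increases, or `q` is constant and the breakpoint value
decreases, or both are constant and the dyadic part increases lexicographically; and for
`τ` fully dyadic, `τ'` is fully dyadic and either the sum of components decreases or it
stays constant and the sequence increases lexicographically. -/
theorem stmt16 :
    (∀ x : List ℕ, ¬ Relation.TransGen edgeBc x x) ∧
    (∀ τ τ' : List ℕ, posL τ → dmTgt τ τ' → ¬ fullyDyadic τ →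
      dyLen τ < dyLen τ' ∨
      (dyLen τ' = dyLen τ ∧ bval τ' < bval τ) ∨
      (dyLen τ' = dyLen τ ∧ bval τ' = bval τ ∧
        List.Lex (· < ·) (τ.take (dyLen τ)) (τ'.take (dyLen τ')))) ∧
    (∀ τ τ' : List ℕ, posL τ → dmTgt τ τ' → fullyDyadic τ →
      fullyDyadic τ' ∧ (τ'.sum < τ.sum ∨ (τ'.sum = τ.sum ∧ List.Lex (· < ·) τ τ'))) := by
  refine ⟨acyclic, ?_, ?_⟩
  · intro τ τ' hτ hdm hnfd
    obtain ⟨-, j, hj, hpy, hnm, hrel⟩ := hdm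
    exact key_nfd hτ hnfd hj hnm hrel (key_len hj hrel)
  · intro τ τ' hτ hdm hfd
    obtain ⟨-, j, hj, hpy, hnm, hrel⟩ := hdm
    exact key_fd hτ hfd hj hnm hrel
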